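/- Let σ > 0 be real and m ≥ 1 a natural number, and define g : ℝ → ℝ by g(x) = 1 − (m · x · e^{−x}) / ( m(1 − e^{−x}) + σ² ). Then there exists x* > 0 such that g(x*) = x* and g(x) ≥ g(x*) for all x ≥ 0. -/

import Mathlib

open Real Set

set_option maxHeartbeats 1000000

/-- For the RBF central-differencing bound `g(x) = 1 - m·x·e^{-x} / (m(1-e^{-x}) + σ²)`,
there is a positive minimizer of `g` over `[0, ∞)` which is a fixed point of `g`. -/
theorem rbf_bound_min_is_fixed_point (σ : ℝ) (hσ : 0 < σ) (m : ℕ) (hm : 1 ≤ m) :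
    ∃ xstar : ℝ, 0 < xstar ∧
      (1 - ((m : ℝ) * xstar * Real.exp (-xstar)) /
          ((m : ℝ) * (1 - Real.exp (-xstar)) + σ ^ 2) = xstar) ∧
      ∀ x : ℝ, 0 ≤ x →
        1 - ((m : ℝ) * xstar * Real.exp (-xstar)) /
            ((m : ℝ) * (1 - Real.exp (-xstar)) + σ ^ 2) ≤
          1 - ((m : ℝ) * x * Real.exp (-x)) /
            ((m : ℝ) * (1 - Real.exp (-x)) + σ ^ 2) := by
  have hMpos : (0:ℝ) < (m:ℝ) := by exact_mod_cast Nat.lt_of_lt_of_le Nat.zero_lt_one hm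
  set M : ℝ := (m : ℝ) with hM
  -- the denominator is positive for x ≥ 0
  have hDpos : ∀ x : ℝ, 0 ≤ x → 0 < M * (1 - Real.exp (-x)) + σ ^ 2 := by
    intro x hx
    have hle : Real.exp (-x) ≤ 1 := Real.exp_le_one_iff.mpr (by linarith)
    have : 0 ≤ M * (1 - Real.exp (-x)) := mul_nonneg hMpos.le (by linarith)
    nlinarith [sq_nonneg σ, hσ]
  -- ψ(x) = (1-x) D(x) - M x e^{-x}; a root gives a fixed point of g
  set ψ : ℝ → ℝ := fun x => (1 - x) * (M * (1 - Real.exp (-x)) + σ ^ 2)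
      - M * x * Real.exp (-x) with hψdef
  have hψcont : ContinuousOn ψ (Icc 0 1) := by
    apply Continuous.continuousOn
    continuity
  have hψ0 : ψ 0 = σ ^ 2 := by simp [hψdef]
  have hψ1 : ψ 1 = -(M * Real.exp (-1)) := by simp [hψdef]
  have hmem : (0:ℝ) ∈ Ioo (ψ 1) (ψ 0) := by
    constructor
    · rw [hψ1]
      have := Real.exp_pos (-1)
      nlinarith
    · rw [hψ0]; positivity
  obtain ⟨c, hcmem, hc⟩ := intermediate_value_Ioo' (by norm_num : (0:ℝ) ≤ 1) hψcont hmem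
  have hc0 : 0 < c := hcmem.1
  -- hc : ψ c = 0
  have hψc : (1 - c) * (M * (1 - Real.exp (-c)) + σ ^ 2) - M * c * Real.exp (-c) = 0 := hc
  have hDc : 0 < M * (1 - Real.exp (-c)) + σ ^ 2 := hDpos c hc0.le
  -- fixed point equation
  have hfix : 1 - (M * c * Real.exp (-c)) / (M * (1 - Real.exp (-c)) + σ ^ 2) = c := by
    have hnum : M * c * Real.exp (-c) = (1 - c) * (M * (1 - Real.exp (-c)) + σ ^ 2) := by
      linarith
    rw [hnum, mul_div_assoc, div_self hDc.ne', mul_one]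
    ring
  -- F(x) = (1-c) D(x) - M x e^{-x} is ≥ 0 on [0,∞)
  set F : ℝ → ℝ := fun x => (1 - c) * (M * (1 - Real.exp (-x)) + σ ^ 2)
      - M * x * Real.exp (-x) with hFdef
  have hF' : ∀ x : ℝ, HasDerivAt F (M * Real.exp (-x) * (x - c)) x := by
    intro x
    have he : HasDerivAt (fun y : ℝ => Real.exp (-y)) (-Real.exp (-x)) x := by
      simpa using ((hasDerivAt_id x).neg.exp)
    have h1 : HasDerivAt (fun y : ℝ => (1 - c) * (M * (1 - Real.exp (-y)) + σ ^ 2))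
        ((1 - c) * (M * Real.exp (-x))) x := by
      have := ((((hasDerivAt_const x (1:ℝ)).sub he).const_mul M).add_const
        (σ ^ 2)).const_mul (1 - c)
      exact this.congr_deriv (by
      ring)
    have h2 : HasDerivAt (fun y : ℝ => M * y * Real.exp (-y))
        (M * Real.exp (-x) + M * x * (-Real.exp (-x))) x := by
      have := (((hasDerivAt_id x).const_mul M).mul he)
      exact this.congr_deriv (by
      simp [id])
    have := h1.sub h2
    exact this.congr_deriv (by
    ring)
  have hFc : F c = 0 := hψc
  have hFcont : Continuous F := by continuity
  have hFnonneg : ∀ x : ℝ, 0 ≤ x → 0 ≤ F x := by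
    intro x hx
    rcases le_total x c with hxc | hxc
    · have hanti : AntitoneOn F (Icc 0 c) := by
        apply antitoneOn_of_deriv_nonpos (convex_Icc 0 c) hFcont.continuousOn
        · intro y _; exact (hF' y).differentiableAt.differentiableWithinAt
        · intro y hy
          rw [interior_Icc] at hy
          rw [(hF' y).deriv]
          have : 0 < M * Real.exp (-y) := by positivity
          nlinarith [hy.2]
      have h := hanti ⟨hx, hxc⟩ ⟨hc0.le, le_refl c⟩ hxc
      rw [hFc] at h
      exact h
    · have hmono : MonotoneOn F (Ici c) := by
        apply monotoneOn_of_deriv_nonneg (convex_Ici c) hFcont.continuousOn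
        · intro y _; exact (hF' y).differentiableAt.differentiableWithinAt
        · intro y hy
          rw [interior_Ici] at hy
          rw [(hF' y).deriv]
          have : 0 < M * Real.exp (-y) := by positivity
          nlinarith [mem_Ioi.mp hy]
      have h := hmono (mem_Ici.mpr (le_refl c)) (mem_Ici.mpr hxc) hxc
      rw [hFc] at h
      exact h
  refine ⟨c, hc0, hfix, ?_⟩
  intro x hx
  rw [hfix]
  have hDx := hDpos x hx
  have hFx : 0 ≤ (1 - c) * (M * (1 - Real.exp (-x)) + σ ^ 2) - M * x * Real.exp (-x) :=
    hFnonneg x hx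
  have hdiv : M * x * Real.exp (-x) / (M * (1 - Real.exp (-x)) + σ ^ 2) ≤ 1 - c := by
    rw [div_le_iff₀ hDx]
    linarith
  linarith
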